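/- Let (Ω, ℱ, P) be a probability space and X₁, …, X_n : Ω → ℝ be independent random variables. Let v₁, …, v_n ∈ ℝ, let k₁, …, k_n be positive reals with k₁ + ⋯ + k_n = m, and let M₁, …, M_n > 0, ε ≥ 0, σ > 0 be constants such that for every i and every λ ∈ ℝ the function ω ↦ exp(λ·(Xᵢ(ω) − vᵢ)) is integrable and E[exp(λ(Xᵢ − vᵢ))] ≤ Mᵢ·exp(ε|λ| + λ²/(2σ²kᵢ)). Then the weighted average Y = Σᵢ (kᵢ/m)·Xᵢ, with v = Σᵢ (kᵢ/m)·vᵢ, satisfies, for every λ ∈ ℝ, E[exp(λ(Y − v))] ≤ (∏ᵢ Mᵢ)·exp(ε|λ| + λ²/(2σ²m)). -/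

import Mathlib

open MeasureTheory ProbabilityTheory Real

/-- MGF bound for a weighted average of independent estimates (AVG node of TrailBlazer):
biases average while the variance parameters `1/(σ² kᵢ)` combine into `1/(σ² m)` with
`m = ∑ kᵢ`, and the multiplicative constants multiply. -/
theorem mgf_bound_weighted_average {Ω : Type*} [MeasurableSpace Ω]
    (μ : Measure Ω) [IsProbabilityMeasure μ]
    (n : ℕ) (hn : 0 < n) (X : Fin n → Ω → ℝ) (hX : ∀ i, Measurable (X i))
    (hindep : iIndepFun X μ)
    (v : Fin n → ℝ) (k : Fin n → ℝ) (hk : ∀ i, 0 < k i)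
    (m : ℝ) (hm : ∑ i, k i = m)
    (M : Fin n → ℝ) (hM : ∀ i, 0 < M i)
    (ε σ : ℝ) (hε : 0 ≤ ε) (hσ : 0 < σ)
    (hmgf : ∀ i, ∀ l : ℝ, Integrable (fun ω => Real.exp (l * (X i ω - v i))) μ ∧
      ∫ ω, Real.exp (l * (X i ω - v i)) ∂μ ≤
        M i * Real.exp (ε * |l| + l ^ 2 / (2 * σ ^ 2 * k i)))
    (l : ℝ) :
    ∫ ω, Real.exp (l * ((∑ i, (k i / m) * X i ω) - ∑ i, (k i / m) * v i)) ∂μ ≤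
      (∏ i, M i) * Real.exp (ε * |l| + l ^ 2 / (2 * σ ^ 2 * m)) := by
  have hm0 : 0 < m := by
    rw [← hm]
    exact Finset.sum_pos (fun i _ => hk i) (Finset.univ_nonempty_iff.mpr ⟨⟨0, hn⟩⟩)
  -- the shifted weighted variables
  set W : Fin n → Ω → ℝ := fun i ω => (k i / m) * (X i ω - v i) with hW
  have hWmeas : ∀ i, Measurable (W i) := fun i =>
    (((hX i).sub_const (v i)).const_mul _)
  have hWindep : iIndepFun W μ := by
    have := hindep.comp (fun i x => (k i / m) * (x - v i))
      (fun i => (measurable_id.sub_const (v i)).const_mul _)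
    exact this
  -- rewrite integrand as exp (l * (∑ W i) ω)
  have hrw : ∀ ω, Real.exp (l * ((∑ i, (k i / m) * X i ω) - ∑ i, (k i / m) * v i))
      = Real.exp (l * (∑ i, W i) ω) := by
    intro ω
    congr 1
    rw [Finset.sum_apply]
    simp only [hW, mul_sub, Finset.sum_sub_distrib]
  simp_rw [hrw]
  have hmgfW : ∀ i, mgf (W i) μ l ≤
      M i * Real.exp (ε * (|l| * (k i / m)) + l ^ 2 * k i / (2 * σ ^ 2 * m ^ 2)) := by
    intro i
    have h := (hmgf i (l * (k i / m))).2
    have heq : ∀ ω, Real.exp (l * (k i / m) * (X i ω - v i)) = Real.exp (l * W i ω) := by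
      intro ω; congr 1; simp only [hW]; ring
    rw [mgf]
    simp_rw [← heq]
    refine h.trans (le_of_eq ?_)
    rw [abs_mul, abs_of_pos (div_pos (hk i) hm0)]
    have hki : k i ≠ 0 := (hk i).ne'
    have hmne : m ≠ 0 := hm0.ne'
    congr 1
    field_simp
  have hsum : mgf (∑ i, W i) μ l = ∏ i, mgf (W i) μ l :=
    hWindep.mgf_sum hWmeas Finset.univ
  calc ∫ ω, Real.exp (l * (∑ i, W i) ω) ∂μ = ∏ i, mgf (W i) μ l := hsum
    _ ≤ ∏ i, M i * Real.exp (ε * (|l| * (k i / m)) + l ^ 2 * k i / (2 * σ ^ 2 * m ^ 2)) := by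
        refine Finset.prod_le_prod (fun i _ => mgf_nonneg) (fun i _ => hmgfW i)
    _ = (∏ i, M i) * Real.exp (∑ i, (ε * (|l| * (k i / m)) + l ^ 2 * k i / (2 * σ ^ 2 * m ^ 2))) := by
        rw [Finset.prod_mul_distrib, Real.exp_sum]
    _ = (∏ i, M i) * Real.exp (ε * |l| + l ^ 2 / (2 * σ ^ 2 * m)) := by
        congr 2
        rw [Finset.sum_add_distrib]
        have h1 : ∑ i, ε * (|l| * (k i / m)) = ε * |l| := by
          rw [← Finset.mul_sum, ← Finset.mul_sum, ← Finset.sum_div, hm]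
          field_simp
        have h2 : ∑ i, l ^ 2 * k i / (2 * σ ^ 2 * m ^ 2) = l ^ 2 / (2 * σ ^ 2 * m) := by
          rw [← Finset.sum_div, ← Finset.mul_sum, hm]
          field_simp
        rw [h1, h2]
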